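/- Let F be a finite field with q elements, let m be a positive integer, and let A be an m×m matrix over F of rank r. Then the principal left ideal RA = {B*A : B an m×m matrix over F} of the matrix ring has exactly q^(r·m) elements. -/

import Mathlib

theorem card_principal_left_ideal_matrix
    {F : Type*} [Field F] [Fintype F] (q : ℕ) (hq : Fintype.card F = q)
    (m : ℕ) (hm : 0 < m) (A : Matrix (Fin m) (Fin m) F) (r : ℕ) (hr : A.rank = r) :
    Nat.card {X : Matrix (Fin m) (Fin m) F | ∃ B : Matrix (Fin m) (Fin m) F, X = B * A}
      = q ^ (r * m) := by
  classical
  set S : Set (Fin m → F) := ↑(LinearMap.range A.vecMulLinear) with hS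
  have hrow : ∀ (B : Matrix (Fin m) (Fin m) F) (i : Fin m),
      (B * A) i = A.vecMulLinear (B i) := by
    intro B i
    ext j
    simp [Matrix.mul_apply, Matrix.vecMul, dotProduct]
  have hset : {X : Matrix (Fin m) (Fin m) F | ∃ B : Matrix (Fin m) (Fin m) F, X = B * A}
      = Set.univ.pi (fun _ : Fin m => S) := by
    ext X
    simp only [Set.mem_setOf_eq, Set.mem_pi, Set.mem_univ, forall_true_left]
    constructor
    · rintro ⟨B, rfl⟩ i _
      exact ⟨B i, (hrow B i).symm⟩
    · intro h
      choose B hB using fun i => h i (Set.mem_univ i)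
      refine ⟨Matrix.of B, ?_⟩
      ext i j
      rw [show (Matrix.of B * A) i = A.vecMulLinear (B i) from hrow (Matrix.of B) i, hB i]
  have hcardS : Nat.card S = q ^ r := by
    have : Nat.card S = Fintype.card (LinearMap.range A.vecMulLinear) := by
      rw [Nat.card_eq_fintype_card]
      exact Fintype.card_congr (Equiv.refl _)
    rw [this, Module.card_eq_pow_finrank (K := F), hq]
    congr 1
    rw [range_vecMulLinear]
    rw [← hr, Matrix.rank_eq_finrank_span_row]
  rw [hset, Nat.card_eq_fintype_card]
  refine (Fintype.card_congr (Equiv.Set.univPi (fun _ : Fin m => S))).trans ?_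
  rw [Fintype.card_pi]
  simp only [Finset.prod_const, Finset.card_univ, Fintype.card_fin]
  rw [← Nat.card_eq_fintype_card, hcardS, ← pow_mul]
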